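/- arXiv:1112.3073 — 4 statements merged into one kernel-verified Lean document; each statement's English description precedes it below -/
import Mathlib

section
/- Let K be a convex body in R^n containing 0 in its interior. Define A(t) = t·log N(K, t B_2^n) and B(t) = t·log N(B_2^n, t K°) for t > 0, where K° is the polar body of K. Then sup_{t>0} B(t) ≤ 16·sup_{t>0} A(t). -/
open MeasureTheory Set
open scoped Pointwise RealInnerProductSpace

/-- Covering number: the least `N` such that `A` is covered by `N` translates of `B`. -/
noncomputable def covN {n : ℕ} (A B : Set (EuclideanSpace ℝ (Fin n))) : ℕ :=
  sInf {N : ℕ | ∃ F : Finset (EuclideanSpace ℝ (Fin n)), F.card = N ∧ A ⊆ ⋃ c ∈ F, c +ᵥ B}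

/-- The polar body `K° = {y : ⟨x,y⟩ ≤ 1 for all x ∈ K}`. -/
def polarBody {n : ℕ} (K : Set (EuclideanSpace ℝ (Fin n))) : Set (EuclideanSpace ℝ (Fin n)) :=
  {y | ∀ x ∈ K, ⟪x, y⟫ ≤ 1}

section Aux

variable {n : ℕ}
local notation "E" => EuclideanSpace ℝ (Fin n)

noncomputable local instance : DecidableEq (EuclideanSpace ℝ (Fin n)) := Classical.decEq _

/-- There exists a finite cover of `A` by translates of `B`. -/
def HasCover (A B : Set (EuclideanSpace ℝ (Fin n))) : Prop :=
  ∃ F : Finset (EuclideanSpace ℝ (Fin n)), A ⊆ ⋃ c ∈ F, c +ᵥ B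

lemma covN_le {A B : Set E} {F : Finset E} (h : A ⊆ ⋃ c ∈ F, c +ᵥ B) : covN A B ≤ F.card :=
  Nat.sInf_le ⟨F, rfl, h⟩

lemma covN_spec {A B : Set E} (h : HasCover A B) :
    ∃ F : Finset E, F.card = covN A B ∧ A ⊆ ⋃ c ∈ F, c +ᵥ B := by
  obtain ⟨F, hF⟩ := h
  have hne : {N : ℕ | ∃ F : Finset (EuclideanSpace ℝ (Fin n)), F.card = N ∧
      A ⊆ ⋃ c ∈ F, c +ᵥ B}.Nonempty := ⟨F.card, F, rfl, hF⟩
  obtain ⟨G, hG1, hG2⟩ := Nat.sInf_mem hne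
  exact ⟨G, hG1, hG2⟩

lemma hasCover_mono {A A' B B' : Set E} (hA : A' ⊆ A) (hB : B ⊆ B') (h : HasCover A B) :
    HasCover A' B' := by
  obtain ⟨F, hF⟩ := h
  exact ⟨F, hA.trans (hF.trans (Set.iUnion₂_mono fun c _ => Set.vadd_set_mono hB))⟩

lemma smul_vadd_set (r : ℝ) (c : E) (B : Set E) : r • (c +ᵥ B) = (r • c) +ᵥ (r • B) := by
  ext x
  simp only [Set.mem_smul_set, Set.mem_vadd_set]
  constructor
  · rintro ⟨y, ⟨b, hb, rfl⟩, rfl⟩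
    exact ⟨r • b, ⟨b, hb, rfl⟩, by simp [smul_add]⟩
  · rintro ⟨y, ⟨b, hb, rfl⟩, rfl⟩
    exact ⟨c + b, ⟨b, hb, rfl⟩, by simp [smul_add]⟩

lemma cover_smul {A B : Set E} {F : Finset E} (r : ℝ) (h : A ⊆ ⋃ c ∈ F, c +ᵥ B) :
    r • A ⊆ ⋃ c ∈ F.image (r • ·), c +ᵥ (r • B) := by
  rintro x ⟨a, ha, rfl⟩
  obtain ⟨c, hc, hac⟩ := Set.mem_iUnion₂.1 (h ha)
  refine Set.mem_iUnion₂.2 ⟨r • c, Finset.mem_image_of_mem _ hc, ?_⟩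
  rw [← smul_vadd_set]
  exact Set.smul_mem_smul_set hac

lemma hasCover_smul {A B : Set E} (r : ℝ) (h : HasCover A B) : HasCover (r • A) (r • B) := by
  obtain ⟨F, hF⟩ := h
  exact ⟨F.image (r • ·), cover_smul r hF⟩

lemma covN_eq_zero {A B : Set E} (h : ¬ HasCover A B) : covN A B = 0 := by
  simp only [covN]
  rw [Nat.sInf_eq_zero]
  right
  rw [Set.eq_empty_iff_forall_notMem]
  rintro N ⟨F, hF1, hF2⟩
  exact h ⟨F, hF2⟩

lemma covN_smul_le (r : ℝ) (hr : r ≠ 0) (A B : Set E) : covN (r • A) (r • B) ≤ covN A B := by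
  by_cases h : HasCover A B
  · obtain ⟨F, hF1, hF2⟩ := covN_spec h
    calc covN (r • A) (r • B) ≤ (F.image (r • ·)).card := covN_le (cover_smul r hF2)
    _ ≤ F.card := Finset.card_image_le
    _ = covN A B := hF1
  · have h2 : ¬ HasCover (r • A) (r • B) := by
      intro h2
      have := hasCover_smul r⁻¹ h2
      rw [inv_smul_smul₀ hr, inv_smul_smul₀ hr] at this
      exact h this
    rw [covN_eq_zero h2]
    exact Nat.zero_le _

lemma covN_smul (r : ℝ) (hr : r ≠ 0) (A B : Set E) : covN (r • A) (r • B) = covN A B := by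
  refine le_antisymm (covN_smul_le r hr A B) ?_
  have := covN_smul_le r⁻¹ (inv_ne_zero hr) (r • A) (r • B)
  rwa [inv_smul_smul₀ hr, inv_smul_smul₀ hr] at this

lemma covN_tri {A B C : Set E} (hAB : HasCover A B) (hBC : HasCover B C) :
    covN A C ≤ covN A B * covN B C := by
  obtain ⟨F, hF1, hF2⟩ := covN_spec hAB
  obtain ⟨G, hG1, hG2⟩ := covN_spec hBC
  have hcov : A ⊆ ⋃ c ∈ (F ×ˢ G).image (fun p => p.1 + p.2), c +ᵥ C := by
    intro a ha
    obtain ⟨f, hf, haf⟩ := Set.mem_iUnion₂.1 (hF2 ha)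
    obtain ⟨b, hb, rfl⟩ := haf
    obtain ⟨g, hg, hbg⟩ := Set.mem_iUnion₂.1 (hG2 hb)
    obtain ⟨c, hc, rfl⟩ := hbg
    refine Set.mem_iUnion₂.2 ⟨f + g, Finset.mem_image.2 ⟨(f, g), Finset.mem_product.2 ⟨hf, hg⟩, rfl⟩, ?_⟩
    exact ⟨c, hc, by simp [vadd_eq_add]; abel⟩
  calc covN A C ≤ ((F ×ˢ G).image (fun p => p.1 + p.2)).card := covN_le hcov
  _ ≤ (F ×ˢ G).card := Finset.card_image_le
  _ = F.card * G.card := Finset.card_product F G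
  _ = covN A B * covN B C := by rw [hF1, hG1]

lemma hasCover_trans {A B C : Set E} (hAB : HasCover A B) (hBC : HasCover B C) :
    HasCover A C := by
  obtain ⟨F, hF2⟩ := hAB
  obtain ⟨G, hG2⟩ := hBC
  refine ⟨(F ×ˢ G).image (fun p => p.1 + p.2), ?_⟩
  intro a ha
  obtain ⟨f, hf, haf⟩ := Set.mem_iUnion₂.1 (hF2 ha)
  obtain ⟨b, hb, rfl⟩ := haf
  obtain ⟨g, hg, hbg⟩ := Set.mem_iUnion₂.1 (hG2 hb)
  obtain ⟨c, hc, rfl⟩ := hbg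
  refine Set.mem_iUnion₂.2 ⟨f + g, Finset.mem_image.2 ⟨(f, g), Finset.mem_product.2 ⟨hf, hg⟩, rfl⟩, ?_⟩
  exact ⟨c, hc, by simp [vadd_eq_add]; abel⟩

lemma covN_absorb {A D B C : Set E} (hsub : A ⊆ D + B) (habs : B + B ⊆ C)
    (hDB : HasCover D B) : covN A C ≤ covN D B := by
  obtain ⟨F, hF1, hF2⟩ := covN_spec hDB
  have hcov : A ⊆ ⋃ c ∈ F, c +ᵥ C := by
    intro a ha
    obtain ⟨d, hd, b, hb, rfl⟩ := hsub ha
    obtain ⟨f, hf, hdf⟩ := Set.mem_iUnion₂.1 (hF2 hd)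
    obtain ⟨b', hb', rfl⟩ := hdf
    refine Set.mem_iUnion₂.2 ⟨f, hf, ?_⟩
    refine ⟨b' + b, habs ⟨b', hb', b, hb, rfl⟩, by simp [vadd_eq_add]; abel⟩
  calc covN A C ≤ F.card := covN_le hcov
  _ = covN D B := hF1

lemma covN_pos {A B : Set E} (hA : A.Nonempty) (h : HasCover A B) : 0 < covN A B := by
  obtain ⟨F, hF1, hF2⟩ := covN_spec h
  rcases Nat.eq_zero_or_pos (covN A B) with h0 | hpos
  · exfalso
    rw [h0, Finset.card_eq_zero] at hF1
    subst hF1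
    obtain ⟨a, ha⟩ := hA
    simpa using hF2 ha
  · exact hpos

lemma polar_convex (K : Set E) : Convex ℝ (polarBody K) := by
  intro y1 h1 y2 h2 a b ha hb hab x hx
  have e1 := h1 x hx; have e2 := h2 x hx
  rw [inner_add_right, real_inner_smul_right, real_inner_smul_right]
  nlinarith

lemma polar_closed (K : Set E) : IsClosed (polarBody K) := by
  have : polarBody K = ⋂ x ∈ K, {y : E | ⟪x, y⟫ ≤ 1} := by
    ext y; simp [polarBody]
  rw [this]
  exact isClosed_biInter fun x _ =>
    isClosed_le (Continuous.inner continuous_const continuous_id) continuous_const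

lemma zero_mem_polar (K : Set E) : (0 : E) ∈ polarBody K := by
  intro x hx; simp

lemma ball_subset_add_polar {K : Set E} (hKconv : Convex ℝ K) (hKcomp : IsCompact K)
    (hK0 : (0 : E) ∈ K) :
    Metric.closedBall (0 : E) 1 ⊆ K + polarBody K := by
  intro x hx
  by_contra hxn
  have hcl : IsClosed (K + polarBody K) := (polar_closed K).add_left_of_isCompact hKcomp
  have hconv : Convex ℝ (K + polarBody K) := hKconv.add (polar_convex K)
  obtain ⟨f, u, hfu, hux⟩ := geometric_hahn_banach_closed_point hconv hcl hxn
  have h0 : (0:E) ∈ K + polarBody K := ⟨0, hK0, 0, zero_mem_polar K, by simp⟩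
  have hu0 : 0 < u := by have := hfu 0 h0; simpa using this
  obtain ⟨v, hv⟩ : ∃ v : E, ∀ y, ⟪v, y⟫ = u⁻¹ * f y :=
    ⟨(InnerProductSpace.toDual ℝ (EuclideanSpace ℝ (Fin n))).symm (u⁻¹ • f), fun y => by
      rw [InnerProductSpace.toDual_symm_apply]; rfl⟩
  have hvK : v ∈ polarBody K := by
    intro z hz
    have hz' : z ∈ K + polarBody K := ⟨z, hz, 0, zero_mem_polar K, by simp⟩
    have := hfu z hz'
    rw [real_inner_comm, hv, inv_mul_le_iff₀ hu0]
    linarith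
  have hvmem : v ∈ K + polarBody K := ⟨0, hK0, v, hvK, by simp⟩
  have hvn : ‖v‖ < 1 := by
    have h1 : ⟪v, v⟫ < 1 := by
      have := hfu v hvmem
      rw [hv, inv_mul_lt_iff₀ hu0]
      linarith
    by_contra hge
    push_neg at hge
    have : (1:ℝ) ≤ ‖v‖ * ‖v‖ := one_le_mul_of_one_le_of_one_le hge hge
    rw [real_inner_self_eq_norm_mul_norm] at h1
    linarith
  have hx1 : ‖x‖ ≤ 1 := by simpa using hx
  have h2 : ⟪v, x⟫ ≤ ‖v‖ * ‖x‖ := real_inner_le_norm v x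
  have h3 : ‖v‖ * ‖x‖ ≤ 1 := by nlinarith [norm_nonneg (x:E), norm_nonneg (v:E)]
  have h4 : u⁻¹ * f x ≤ 1 := by rw [← hv x]; exact h2.trans h3
  rw [inv_mul_le_iff₀ hu0] at h4
  linarith [hux]

lemma polar_smul {K : Set E} {r : ℝ} (hr : r ≠ 0) : polarBody (r • K) = r⁻¹ • polarBody K := by
  ext y
  constructor
  · intro hy
    refine ⟨r • y, fun x hx => ?_, inv_smul_smul₀ hr y⟩
    have := hy (r • x) (Set.smul_mem_smul_set hx)
    rwa [real_inner_smul_left, ← real_inner_smul_right] at this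
  · rintro ⟨z, hz, rfl⟩ x' hx'
    obtain ⟨x, hx, rfl⟩ := hx'
    have h1 : ⟪r • x, r⁻¹ • z⟫ = ⟪x, z⟫ := by
      rw [real_inner_smul_left, real_inner_smul_right]
      field_simp
    rw [h1]
    exact hz x hx

lemma vadd_closedBall' (x : E) (s : ℝ) :
    x +ᵥ Metric.closedBall (0 : E) s = Metric.closedBall x s := by
  ext y
  rw [Set.mem_vadd_set_iff_neg_vadd_mem]
  simp [dist_eq_norm, neg_add_eq_sub, ← norm_sub_rev (y - x)]

lemma hasCover_compact_ball {K : Set E} (hK : IsCompact K) {s : ℝ} (hs : 0 < s) :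
    HasCover K (Metric.closedBall (0 : E) s) := by
  obtain ⟨F, hF⟩ := hK.elim_finite_subcover (fun x : E => Metric.ball x s)
    (fun _ => Metric.isOpen_ball)
    (fun x hx => Set.mem_iUnion.2 ⟨x, Metric.mem_ball_self hs⟩)
  refine ⟨F, hF.trans ?_⟩
  refine Set.iUnion₂_mono fun c _ => ?_
  rw [vadd_closedBall']
  exact Metric.ball_subset_closedBall

lemma smul_unit_ball {s : ℝ} (hs : 0 < s) :
    s • Metric.closedBall (0 : E) 1 = Metric.closedBall (0 : E) s := by
  rw [smul_closedBall _ _ zero_le_one]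
  simp [abs_of_pos hs, Real.norm_eq_abs]

lemma polar_superset {K : Set E} (hKcomp : IsCompact K) :
    ∃ ε : ℝ, 0 < ε ∧ Metric.closedBall (0 : E) ε ⊆ polarBody K := by
  obtain ⟨R, hR⟩ := hKcomp.isBounded.subset_closedBall 0
  have hR1 : K ⊆ Metric.closedBall 0 (max R 1) :=
    hR.trans (Metric.closedBall_subset_closedBall (le_max_left _ _))
  have hRpos : (0:ℝ) < max R 1 := lt_of_lt_of_le one_pos (le_max_right _ _)
  refine ⟨(max R 1)⁻¹, inv_pos.2 hRpos, ?_⟩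
  intro y hy x hx
  have hx' : ‖x‖ ≤ max R 1 := by simpa using hR1 hx
  have hy' : ‖y‖ ≤ (max R 1)⁻¹ := by simpa using hy
  calc ⟪x, y⟫ ≤ ‖x‖ * ‖y‖ := real_inner_le_norm x y
  _ ≤ (max R 1) * (max R 1)⁻¹ := mul_le_mul hx' hy' (norm_nonneg y) hRpos.le
  _ = 1 := mul_inv_cancel₀ hRpos.ne'

lemma hasCover_ball_polar {K : Set E} (hKcomp : IsCompact K) {s : ℝ} (hs : 0 < s) :
    HasCover (Metric.closedBall (0 : E) 1) (s • polarBody K) := by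
  obtain ⟨ε, hε, hεP⟩ := polar_superset hKcomp
  have h1 : HasCover (Metric.closedBall (0 : E) 1) (Metric.closedBall (0 : E) (s * ε)) :=
    hasCover_compact_ball (isCompact_closedBall _ _) (mul_pos hs hε)
  refine hasCover_mono subset_rfl ?_ h1
  have : Metric.closedBall (0 : E) (s * ε) = s • Metric.closedBall (0 : E) ε := by
    rw [smul_closedBall _ _ hε.le]
    simp [abs_of_pos hs, Real.norm_eq_abs]
  rw [this]
  exact Set.smul_set_mono hεP

end Aux

theorem statement3 (n : ℕ) (hn : 0 < n) (K : Set (EuclideanSpace ℝ (Fin n)))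
    (hKconv : Convex ℝ K) (hKcomp : IsCompact K) (hK0 : 0 ∈ interior K)
    (A B : ℝ → ℝ)
    (hA : ∀ t, A t = t * Real.log (covN K (t • Metric.closedBall (0 : EuclideanSpace ℝ (Fin n)) 1)))
    (hB : ∀ t, B t = t * Real.log (covN (Metric.closedBall (0 : EuclideanSpace ℝ (Fin n)) 1)
      (t • polarBody K)))
    (hAbdd : BddAbove (A '' Ioi 0)) :
    sSup (B '' Ioi 0) ≤ 16 * sSup (A '' Ioi 0) := by
  set Ball : Set (EuclideanSpace ℝ (Fin n)) := Metric.closedBall 0 1 with hBalldef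
  have hK0mem : (0 : EuclideanSpace ℝ (Fin n)) ∈ K := interior_subset hK0
  -- nonnegativity of A and B
  have hApos : ∀ t ∈ Ioi (0:ℝ), 0 ≤ A t := by
    intro t ht
    rw [hA t]
    exact mul_nonneg (le_of_lt ht) (Real.log_natCast_nonneg _)
  have hBpos : ∀ t ∈ Ioi (0:ℝ), 0 ≤ B t := by
    intro t ht
    rw [hB t]
    exact mul_nonneg (le_of_lt ht) (Real.log_natCast_nonneg _)
  have hAne : (A '' Ioi 0).Nonempty := ⟨A 1, 1, Set.mem_Ioi.2 one_pos, rfl⟩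
  have hSA0 : 0 ≤ sSup (A '' Ioi 0) :=
    le_trans (hApos 1 (Set.mem_Ioi.2 one_pos)) (le_csSup hAbdd ⟨1, Set.mem_Ioi.2 one_pos, rfl⟩)
  -- the key recursive inequality
  have key : ∀ t : ℝ, 0 < t → B t ≤ 8 * A (t/8) + (1/2) * B (2*t) := by
    intro t ht
    have htne : t ≠ 0 := ht.ne'
    set Kt : Set (EuclideanSpace ℝ (Fin n)) := (2/t) • K with hKt
    set Pt : Set (EuclideanSpace ℝ (Fin n)) := (t/2) • polarBody K with hPt
    have h2t : (0:ℝ) < 2/t := div_pos two_pos ht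
    have ht2 : (0:ℝ) < t/2 := div_pos ht two_pos
    have hpolarKt : polarBody Kt = Pt := by
      rw [hKt, polar_smul (ne_of_gt h2t), inv_div]
    have hKt0 : (0 : EuclideanSpace ℝ (Fin n)) ∈ Kt := ⟨0, hK0mem, smul_zero _⟩
    have hsub : Ball ⊆ Kt + Pt := by
      have := ball_subset_add_polar (hKconv.smul (2/t)) (hKcomp.smul (2/t)) hKt0
      rwa [hpolarKt] at this
    have habs : Pt + Pt ⊆ (t • polarBody K) := by
      have := (polar_convex K).add_smul ht2.le ht2.le
      rw [show t/2 + t/2 = t by ring] at this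
      rw [hPt, ← this]
    -- covers
    have hcovKt : HasCover Kt ((1/4 : ℝ) • Ball) := by
      have h1 : HasCover K ((t/8 : ℝ) • Ball) := by
        rw [hBalldef, smul_unit_ball (div_pos ht (by norm_num) : (0:ℝ) < t/8)]
        exact hasCover_compact_ball hKcomp (div_pos ht (by norm_num))
      have := hasCover_smul (2/t) h1
      rw [smul_smul] at this
      rw [show (2/t) * (t/8) = 1/4 by field_simp; ring] at this
      exact this
    have hcovQP : HasCover ((1/4 : ℝ) • Ball) Pt := by
      refine hasCover_mono ?_ subset_rfl (hasCover_ball_polar hKcomp ht2)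
      rw [hBalldef, smul_unit_ball (by norm_num : (0:ℝ) < 1/4)]
      exact Metric.closedBall_subset_closedBall (by norm_num)
    have hcovKtPt : HasCover Kt Pt := hasCover_trans hcovKt hcovQP
    -- the covN chain
    have c1 : covN Ball (t • polarBody K) ≤ covN Kt Pt := covN_absorb hsub habs hcovKtPt
    have c2 : covN Kt Pt ≤ covN Kt ((1/4 : ℝ) • Ball) * covN ((1/4 : ℝ) • Ball) Pt :=
      covN_tri hcovKt hcovQP
    have c3 : covN Kt ((1/4 : ℝ) • Ball) = covN K ((t/8 : ℝ) • Ball) := by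
      have := covN_smul (t/2) ht2.ne' Kt ((1/4 : ℝ) • Ball)
      rw [hKt, smul_smul, smul_smul, show (t/2) * (2/t) = 1 by field_simp,
        show (t/2) * (1/4) = t/8 by ring, one_smul] at this
      exact this.symm
    have c4 : covN ((1/4 : ℝ) • Ball) Pt = covN Ball ((2*t) • polarBody K) := by
      have := covN_smul 4 (by norm_num) ((1/4 : ℝ) • Ball) Pt
      rw [hPt, smul_smul, smul_smul, show (4:ℝ) * (1/4) = 1 by norm_num,
        show (4:ℝ) * (t/2) = 2*t by ring, one_smul] at this
      exact this.symm
    -- positivity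
    have hBallne : Ball.Nonempty := ⟨0, by simp [hBalldef]⟩
    have hKne : K.Nonempty := ⟨0, hK0mem⟩
    have hN1pos : 0 < covN K ((t/8 : ℝ) • Ball) := by
      refine covN_pos hKne ?_
      rw [hBalldef, smul_unit_ball (div_pos ht (by norm_num) : (0:ℝ) < t/8)]
      exact hasCover_compact_ball hKcomp (div_pos ht (by norm_num))
    have hN2pos : 0 < covN Ball ((2*t) • polarBody K) :=
      covN_pos hBallne (hasCover_ball_polar hKcomp (mul_pos two_pos ht))
    have hN0pos : 0 < covN Ball (t • polarBody K) :=
      covN_pos hBallne (hasCover_ball_polar hKcomp ht)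
    -- combine
    have hchain : covN Ball (t • polarBody K) ≤
        covN K ((t/8 : ℝ) • Ball) * covN Ball ((2*t) • polarBody K) := by
      calc covN Ball (t • polarBody K) ≤ covN Kt Pt := c1
      _ ≤ _ := c2
      _ = _ := by rw [c3, c4]
    have hlog : Real.log (covN Ball (t • polarBody K)) ≤
        Real.log (covN K ((t/8 : ℝ) • Ball)) + Real.log (covN Ball ((2*t) • polarBody K)) := by
      rw [← Real.log_mul (by exact_mod_cast hN1pos.ne') (by exact_mod_cast hN2pos.ne')]
      apply Real.log_le_log (by exact_mod_cast hN0pos)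
      exact_mod_cast hchain
    rw [hB t, hB (2*t), hA (t/8)]
    have e1 : (8:ℝ) * ((t/8) * Real.log (covN K ((t/8 : ℝ) • Ball))) =
        t * Real.log (covN K ((t/8 : ℝ) • Ball)) := by ring
    have e2 : (1/2:ℝ) * ((2*t) * Real.log (covN Ball ((2*t) • polarBody K))) =
        t * Real.log (covN Ball ((2*t) • polarBody K)) := by ring
    rw [e1, e2, ← mul_add]
    exact mul_le_mul_of_nonneg_left hlog ht.le
  -- sup argument
  by_cases hBb : BddAbove (B '' Ioi 0)
  · have hBne : (B '' Ioi 0).Nonempty := ⟨B 1, 1, Set.mem_Ioi.2 one_pos, rfl⟩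
    have hstep : sSup (B '' Ioi 0) ≤ 8 * sSup (A '' Ioi 0) + (1/2) * sSup (B '' Ioi 0) := by
      refine csSup_le hBne ?_
      rintro b ⟨t, ht, rfl⟩
      have h1 := key t ht
      have h2 : A (t/8) ≤ sSup (A '' Ioi 0) :=
        le_csSup hAbdd ⟨t/8, by exact div_pos (Set.mem_Ioi.1 ht) (by norm_num), rfl⟩
      have h3 : B (2*t) ≤ sSup (B '' Ioi 0) :=
        le_csSup hBb ⟨2*t, by exact mul_pos two_pos (Set.mem_Ioi.1 ht), rfl⟩
      linarith
    linarith
  · rw [Real.sSup_of_not_bddAbove hBb]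
    linarith
end

section
/- Let L be a convex body and K a symmetric convex body in R^n with L ⊆ bK for some b ≥ 1. Then |conv(K ∪ L)| ≤ 3enb·N(L,K)·|K|. -/
open MeasureTheory Set
open scoped Pointwise

private lemma aux_mem {E : Type*} [AddCommGroup E] [Module ℝ E] {K : Set E} (hK : Convex ℝ K)
    (h0 : (0 : E) ∈ K) {a1 a2 a3 c : ℝ} {x1 x2 x3 : E} (h1 : x1 ∈ K) (h2 : x2 ∈ K) (h3 : x3 ∈ K)
    (ha1 : 0 ≤ a1) (ha2 : 0 ≤ a2) (ha3 : 0 ≤ a3) (hc : 0 < c) (hsum : a1 + a2 + a3 ≤ c) :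
    a1 • x1 + a2 • x2 + a3 • x3 ∈ c • K := by
  have hcne : c ≠ 0 := hc.ne'
  have hv : ∑ i : Fin 4, (![a1/c, a2/c, a3/c, (c-(a1+a2+a3))/c] i) • (![x1,x2,x3,(0 : E)] i) ∈ K := by
    apply hK.sum_mem
    · intro i _
      fin_cases i
      · simpa using div_nonneg ha1 hc.le
      · simpa using div_nonneg ha2 hc.le
      · simpa using div_nonneg ha3 hc.le
      · simpa using div_nonneg (by linarith : (0:ℝ) ≤ c - (a1+a2+a3)) hc.le
    · rw [Fin.sum_univ_four]
      simp only [Matrix.cons_val_zero, Matrix.cons_val_one, Matrix.head_cons,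
        Matrix.cons_val_two, Matrix.tail_cons, Matrix.cons_val_three]
      field_simp
      ring
    · intro i _
      fin_cases i <;> simpa
  refine ⟨_, hv, ?_⟩
  rw [Fin.sum_univ_four]
  simp only [Matrix.cons_val_zero, Matrix.cons_val_one, Matrix.head_cons,
    Matrix.cons_val_two, Matrix.tail_cons, Matrix.cons_val_three, smul_zero, add_zero]
  match_scalars <;> field_simp

set_option maxHeartbeats 1000000 in
/-- If `L` is a convex body and `K` a symmetric convex body in ℝⁿ with
`L ⊆ bK` for some `b ≥ 1`, then `|conv(K ∪ L)| ≤ 3 e n b · N(L,K) · |K|`. -/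
theorem statement5 (n : ℕ) (hn : 0 < n) (K L : Set (EuclideanSpace ℝ (Fin n)))
    (hKconv : Convex ℝ K) (hKcomp : IsCompact K) (hK0 : (interior K).Nonempty)
    (hKsymm : ∀ x ∈ K, -x ∈ K)
    (hLconv : Convex ℝ L) (hLcomp : IsCompact L) (hL0 : (interior L).Nonempty)
    (b : ℝ) (hb : 1 ≤ b) (hLK : L ⊆ b • K) :
    (volume (convexHull ℝ (K ∪ L))).toReal ≤
      3 * Real.exp 1 * n * b * (covN L K) * (volume K).toReal := by
  classical
  -- 0 is in the interior of K
  obtain ⟨x0, hx0⟩ := hK0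
  have h0int : (0 : EuclideanSpace ℝ (Fin n)) ∈ interior K := by
    have h1 : -x0 ∈ K := hKsymm x0 (interior_subset hx0)
    have := hKconv.combo_interior_closure_mem_interior hx0 (subset_closure h1)
      (by norm_num : (0:ℝ) < 1/2) (by norm_num : (0:ℝ) ≤ 1/2) (by norm_num)
    simpa [smul_neg] using this
  have h0K : (0 : EuclideanSpace ℝ (Fin n)) ∈ K := interior_subset h0int
  have hLne : L.Nonempty := hL0.mono interior_subset
  -- a finite covering of L by translates of K exists
  have hne : {N : ℕ | ∃ F : Finset (EuclideanSpace ℝ (Fin n)), F.card = N ∧ L ⊆ ⋃ c ∈ F, c +ᵥ K}.Nonempty := by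
    obtain ⟨F₀, _, hcov⟩ := hLcomp.elim_nhds_subcover (fun x => x +ᵥ interior K)
      (fun x _ => (isOpen_interior.vadd x).mem_nhds ⟨0, h0int, by simp⟩)
    exact ⟨F₀.card, F₀, rfl, hcov.trans (Set.iUnion₂_mono fun c _ =>
      Set.vadd_set_mono interior_subset)⟩
  obtain ⟨F, hFcard, hFcov⟩ := Nat.sInf_mem hne
  set N := covN L K with hN
  have hFN : F.card = N := hFcard
  -- the grid size
  set M : ℕ := n * ⌈b⌉₊ with hM
  have hb0 : (0:ℝ) < b := lt_of_lt_of_le one_pos hb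
  have hMpos : 0 < M := Nat.mul_pos hn (Nat.ceil_pos.2 hb0)
  have hMR : (0:ℝ) < (M:ℝ) := Nat.cast_pos.2 hMpos
  have hnR : (0:ℝ) < (n:ℝ) := Nat.cast_pos.2 hn
  set r : ℝ := 1 + b / M with hr
  have hr1 : (1:ℝ) ≤ r := le_add_of_nonneg_right (div_nonneg hb0.le hMR.le)
  have hrpos : 0 < r := lt_of_lt_of_le one_pos hr1
  -- main inclusion
  have hincl : convexHull ℝ (K ∪ L) ⊆
      ⋃ j ∈ Finset.range M, ⋃ c ∈ F, (((j:ℝ)/M) • c) +ᵥ (r • K) := by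
    rw [hKconv.convexHull_union hLconv ⟨0, h0K⟩ hLne]
    rintro z hz
    rw [mem_convexJoin] at hz
    obtain ⟨x, hxK, y, hyL, hz⟩ := hz
    rw [segment_eq_image₂] at hz
    obtain ⟨⟨α, τ⟩, ⟨hα, hτ, hατ⟩, rfl⟩ := hz
    have hτ1 : τ ≤ 1 := by linarith
    -- choose the grid index
    set j : ℕ := min ⌊τ * M⌋₊ (M - 1) with hj
    have hjM : j < M := lt_of_le_of_lt (min_le_right _ _) (Nat.sub_lt hMpos one_pos)
    have hj1 : (j:ℝ) ≤ τ * M := by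
      calc (j:ℝ) ≤ (⌊τ * M⌋₊ : ℝ) := by exact_mod_cast min_le_left _ _
        _ ≤ τ * M := Nat.floor_le (by positivity)
    have hj2 : τ * M ≤ (j:ℝ) + 1 := by
      rcases min_cases ⌊τ * M⌋₊ (M - 1) with ⟨h, _⟩ | ⟨h, _⟩
      · rw [hj, h]; exact (Nat.lt_floor_add_one _).le
      · rw [hj, h]
        have : ((M - 1 : ℕ) : ℝ) + 1 = (M : ℝ) := by
          have := Nat.sub_add_cancel hMpos
          exact_mod_cast congrArg (Nat.cast (R := ℝ)) this
        rw [this]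
        nlinarith
    set tj : ℝ := (j:ℝ) / M with htj
    have htj0 : 0 ≤ tj := by positivity
    have htjτ : tj ≤ τ := (div_le_iff₀ hMR).2 (by linarith)
    have hτtj : τ - tj ≤ 1 / M := by
      rw [htj, sub_le_iff_le_add, ← add_div]
      exact (le_div_iff₀ hMR).2 (by linarith)
    -- decompose y
    have hy' := hFcov hyL
    simp only [Set.mem_iUnion] at hy'
    obtain ⟨c, hcF, hy'⟩ := hy'
    obtain ⟨k0, hk0K, hy1⟩ := hy'
    obtain ⟨k1, hk1K, hy2⟩ := hLK hyL
    -- membership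
    refine Set.mem_iUnion₂.2 ⟨j, Finset.mem_range.2 hjM, Set.mem_iUnion₂.2 ⟨c, hcF, ?_⟩⟩
    refine ⟨α • x + tj • k0 + ((τ - tj) * b) • k1, ?_, ?_⟩
    · apply aux_mem hKconv h0K hxK hk0K hk1K hα htj0
        (mul_nonneg (by linarith) hb0.le) hrpos
      have h1 : (τ - tj) * b ≤ b / M := by
        rw [div_eq_mul_inv, mul_comm b]
        exact mul_le_mul_of_nonneg_right (by simpa [one_div] using hτtj) hb0.le
      rw [hr]; linarith
    · simp only [vadd_eq_add]
      have e1 : c + k0 = y := hy1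
      have e2 : b • k1 = y := hy2
      have : tj • c + (α • x + tj • k0 + ((τ - tj) * b) • k1)
          = α • x + tj • (c + k0) + (τ - tj) • (b • k1) := by module
      rw [this, e1, e2]
      module
  -- volume bound in ENNReal
  have hvol : volume (convexHull ℝ (K ∪ L)) ≤
      (M : ENNReal) * N * (ENNReal.ofReal (r ^ n) * volume K) := by
    calc volume (convexHull ℝ (K ∪ L))
        ≤ volume (⋃ j ∈ Finset.range M, ⋃ c ∈ F, (((j:ℝ)/M) • c) +ᵥ (r • K)) :=
          measure_mono hincl
      _ ≤ ∑ j ∈ Finset.range M, volume (⋃ c ∈ F, (((j:ℝ)/M) • c) +ᵥ (r • K)) :=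
          measure_biUnion_finset_le _ _
      _ ≤ ∑ j ∈ Finset.range M, ∑ c ∈ F, volume ((((j:ℝ)/M) • c) +ᵥ (r • K)) :=
          Finset.sum_le_sum fun j _ => measure_biUnion_finset_le _ _
      _ = ∑ j ∈ Finset.range M, ∑ _c ∈ F, volume (r • K) := by
          simp [measure_vadd]
      _ = (M : ENNReal) * N * volume (r • K) := by
          simp [Finset.sum_const, hFN, mul_assoc]
      _ = (M : ENNReal) * N * (ENNReal.ofReal (r ^ n) * volume K) := by
          rw [Measure.addHaar_smul, finrank_euclideanSpace_fin, abs_of_nonneg (pow_nonneg hrpos.le n)]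
  have hKfin : volume K ≠ ⊤ := hKcomp.measure_lt_top.ne
  have hfin : (M : ENNReal) * N * (ENNReal.ofReal (r ^ n) * volume K) ≠ ⊤ := by
    apply ENNReal.mul_ne_top (ENNReal.mul_ne_top (ENNReal.natCast_ne_top _)
      (ENNReal.natCast_ne_top _))
    exact ENNReal.mul_ne_top ENNReal.ofReal_ne_top hKfin
  have hto := ENNReal.toReal_mono hfin hvol
  refine hto.trans ?_
  rw [ENNReal.toReal_mul, ENNReal.toReal_mul, ENNReal.toReal_mul, ENNReal.toReal_natCast,
    ENNReal.toReal_natCast, ENNReal.toReal_ofReal (by positivity)]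
  set VK : ℝ := (volume K).toReal with hVK
  have hVK0 : 0 ≤ VK := ENNReal.toReal_nonneg
  -- real arithmetic
  have hMle : (M : ℝ) ≤ 2 * n * b := by
    have h1 : ((⌈b⌉₊ : ℕ) : ℝ) < b + 1 := Nat.ceil_lt_add_one hb0.le
    have : (M : ℝ) = (n : ℝ) * (⌈b⌉₊ : ℝ) := by exact_mod_cast rfl
    rw [this]; nlinarith
  have hrle : r ≤ 1 + 1 / n := by
    have hbM : b / M ≤ 1 / n := by
      rw [div_le_div_iff₀ hMR hnR]
      have h1 : b ≤ (⌈b⌉₊ : ℝ) := Nat.le_ceil b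
      have : (M : ℝ) = (n : ℝ) * (⌈b⌉₊ : ℝ) := by exact_mod_cast rfl
      rw [this]; nlinarith
    rw [hr]; linarith
  have hrn : r ^ n ≤ Real.exp 1 := by
    calc r ^ n ≤ (1 + 1 / n) ^ n := pow_le_pow_left₀ hrpos.le hrle n
      _ ≤ (Real.exp (1 / n)) ^ n := by
          apply pow_le_pow_left₀ (by positivity)
          have := Real.add_one_le_exp (1 / (n:ℝ))
          linarith
      _ = Real.exp 1 := by
          rw [← Real.exp_nat_mul]
          congr 1
          field_simp
  have hexp : (0:ℝ) < Real.exp 1 := Real.exp_pos 1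
  have hN0 : (0:ℝ) ≤ (N:ℝ) := Nat.cast_nonneg N
  have key : (M : ℝ) * (r ^ n) ≤ 3 * Real.exp 1 * n * b := by
    calc (M:ℝ) * r ^ n ≤ (2*n*b) * Real.exp 1 :=
          mul_le_mul hMle hrn (pow_nonneg hrpos.le n) (by positivity)
      _ ≤ (3*n*b) * Real.exp 1 := by
          have h := mul_nonneg hnR.le hb0.le
          exact mul_le_mul_of_nonneg_right (by nlinarith) hexp.le
      _ = 3 * Real.exp 1 * n * b := by ring
  calc (M:ℝ) * (N:ℝ) * (r ^ n * VK) = ((M:ℝ) * r ^ n) * ((N:ℝ) * VK) := by ring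
    _ ≤ (3 * Real.exp 1 * n * b) * ((N:ℝ) * VK) := by
        apply mul_le_mul_of_nonneg_right key (by positivity)
    _ = 3 * Real.exp 1 * n * b * N * VK := by ring
end

section
/- Let K and L be convex bodies in R^n, with L not necessarily symmetric. Then N(K,L) ≤ 4^n · |K+L|/|L|. -/
open MeasureTheory Set
open scoped Pointwise ENNReal

section Aux

variable {n : ℕ}

private lemma aux_meas (L : Set (EuclideanSpace ℝ (Fin n))) (hL : MeasurableSet L) :
    Measurable (fun p : EuclideanSpace ℝ (Fin n) × EuclideanSpace ℝ (Fin n) =>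
      L.indicator (1 : EuclideanSpace ℝ (Fin n) → ℝ≥0∞) p.2 * L.indicator 1 (p.1 - p.2)) :=
  ((measurable_const.indicator hL).comp measurable_snd).mul
    ((measurable_const.indicator hL).comp (measurable_fst.sub measurable_snd))

private lemma aux_pointwise (L : Set (EuclideanSpace ℝ (Fin n))) (hL : MeasurableSet L)
    (x : EuclideanSpace ℝ (Fin n)) :
    volume (L ∩ (fun y => x - y) ⁻¹' L)
      = ∫⁻ y, L.indicator (1 : EuclideanSpace ℝ (Fin n) → ℝ≥0∞) y * L.indicator 1 (x - y) := by
  have hmS : MeasurableSet (L ∩ (fun y => x - y) ⁻¹' L) :=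
    hL.inter (hL.preimage (measurable_const.sub measurable_id))
  rw [← lintegral_indicator_one hmS]
  refine lintegral_congr fun y => ?_
  by_cases h1 : y ∈ L <;> by_cases h2 : x - y ∈ L <;>
    simp [Set.indicator_apply, h1, h2]

private lemma aux_lintegral (L : Set (EuclideanSpace ℝ (Fin n))) (hL : MeasurableSet L) :
    ∫⁻ x, volume (L ∩ (fun y => x - y) ⁻¹' L) = volume L * volume L := by
  calc ∫⁻ x, volume (L ∩ (fun y => x - y) ⁻¹' L)
      = ∫⁻ x, ∫⁻ y, L.indicator (1 : EuclideanSpace ℝ (Fin n) → ℝ≥0∞) y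
          * L.indicator 1 (x - y) := lintegral_congr (aux_pointwise L hL)
    _ = ∫⁻ y, ∫⁻ x, L.indicator (1 : EuclideanSpace ℝ (Fin n) → ℝ≥0∞) y
          * L.indicator 1 (x - y) := lintegral_lintegral_swap (aux_meas L hL).aemeasurable
    _ = ∫⁻ y, L.indicator (1 : EuclideanSpace ℝ (Fin n) → ℝ≥0∞) y * volume L := by
        refine lintegral_congr fun y => ?_
        have hm : Measurable fun x : EuclideanSpace ℝ (Fin n) =>
            L.indicator (1 : EuclideanSpace ℝ (Fin n) → ℝ≥0∞) (x - y) :=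
          (measurable_const.indicator hL).comp (measurable_id.sub measurable_const)
        rw [lintegral_const_mul _ hm]
        congr 1
        have : ∫⁻ x, L.indicator (1 : EuclideanSpace ℝ (Fin n) → ℝ≥0∞) (x - y)
            = ∫⁻ x, L.indicator 1 x := by
          simp_rw [sub_eq_add_neg]
          exact lintegral_add_right_eq_self _ (-y)
        rw [this, lintegral_indicator_one hL]
    _ = volume L * volume L := by
        have hm2 : Measurable (L.indicator (1 : EuclideanSpace ℝ (Fin n) → ℝ≥0∞)) :=
          measurable_const.indicator hL
        rw [lintegral_mul_const _ hm2, lintegral_indicator_one hL]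

private lemma aux_vanish (L : Set (EuclideanSpace ℝ (Fin n))) {x : EuclideanSpace ℝ (Fin n)}
    (hx : x ∉ L + L) : L ∩ (fun y => x - y) ⁻¹' L = ∅ := by
  rw [Set.eq_empty_iff_forall_notMem]
  rintro y ⟨hy, hxy⟩
  have h : y + (x - y) ∈ L + L := Set.add_mem_add hy hxy
  exact hx (by simpa using h)

private lemma aux_LL (L : Set (EuclideanSpace ℝ (Fin n))) (hLconv : Convex ℝ L) :
    volume (L + L) = 2 ^ n * volume L := by
  have h2 : ((1 : ℝ) + 1) • L = (1 : ℝ) • L + (1 : ℝ) • L :=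
    hLconv.add_smul zero_le_one zero_le_one
  norm_num [one_smul] at h2
  rw [← h2, Measure.addHaar_smul]
  simp [finrank_euclideanSpace_fin]

/-- There exists a translate `v` such that `L ∩ (v - L)` has large volume. -/
private lemma exists_center (L : Set (EuclideanSpace ℝ (Fin n)))
    (hLconv : Convex ℝ L) (hLcomp : IsCompact L) (hL0 : (interior L).Nonempty) :
    ∃ v, volume L ≤ 2 ^ n * volume (L ∩ (fun y => v - y) ⁻¹' L) := by
  have hLmeas : MeasurableSet L := hLcomp.isClosed.measurableSet
  have hLpos : 0 < volume L := Measure.measure_pos_of_nonempty_interior _ hL0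
  have hLfin : volume L ≠ ∞ := hLcomp.measure_lt_top.ne
  have hLLcomp : IsCompact (L + L) := hLcomp.add hLcomp
  have hLLmeas : MeasurableSet (L + L) := hLLcomp.isClosed.measurableSet
  have hLLvol : volume (L + L) = 2 ^ n * volume L := aux_LL L hLconv
  have h2n0 : (2 : ℝ≥0∞) ^ n ≠ 0 := by positivity
  have h2nt : (2 : ℝ≥0∞) ^ n ≠ ∞ := by
    exact ENNReal.pow_ne_top (by norm_num)
  by_contra hcon
  push_neg at hcon
  set f : EuclideanSpace ℝ (Fin n) → ℝ≥0∞ :=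
    fun x => volume (L ∩ (fun y => x - y) ⁻¹' L) with hf
  have hre : ∫⁻ x in L + L, f x = volume L * volume L := by
    rw [← aux_lintegral L hLmeas, ← lintegral_indicator hLLmeas]
    refine lintegral_congr fun x => ?_
    by_cases hx : x ∈ L + L
    · simp [hx, hf]
    · simp [hx, hf, aux_vanish L hx]
  have hflt : ∀ x, f x < volume L / 2 ^ n := by
    intro x
    rw [ENNReal.lt_div_iff_mul_lt (Or.inl h2n0) (Or.inl h2nt), mul_comm]
    exact hcon x
  have hLLpos : volume (L + L) ≠ 0 := by
    rw [hLLvol]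
    exact mul_ne_zero h2n0 hLpos.ne'
  have hstrict : ∫⁻ x in L + L, f x < ∫⁻ _x in L + L, volume L / 2 ^ n :=
    setLIntegral_strict_mono hLLmeas hLLpos measurable_const
      (by rw [hre]; exact ENNReal.mul_ne_top hLfin hLfin)
      (Filter.Eventually.of_forall fun x _ => hflt x)
  rw [hre, setLIntegral_const, hLLvol, ← mul_assoc,
    ENNReal.div_mul_cancel h2n0 h2nt] at hstrict
  exact lt_irrefl _ hstrict

end Aux

/-- For convex bodies `K, L` in ℝⁿ (`L` not necessarily symmetric),
`N(K, L) ≤ 4ⁿ |K+L| / |L|`. -/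
theorem statement7 (n : ℕ) (hn : 0 < n) (K L : Set (EuclideanSpace ℝ (Fin n)))
    (hKconv : Convex ℝ K) (hKcomp : IsCompact K) (hK0 : (interior K).Nonempty)
    (hLconv : Convex ℝ L) (hLcomp : IsCompact L) (hL0 : (interior L).Nonempty) :
    (covN K L : ℝ) ≤ 4 ^ n * (volume (K + L)).toReal / (volume L).toReal := by
  classical
  obtain ⟨v, hv⟩ := exists_center L hLconv hLcomp hL0
  have hLpos : 0 < volume L := Measure.measure_pos_of_nonempty_interior _ hL0
  have hLfin : volume L ≠ ∞ := hLcomp.measure_lt_top.ne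
  -- the symmetric body S and its recentering M
  set S : Set (EuclideanSpace ℝ (Fin n)) := L ∩ (fun y => v - y) ⁻¹' L with hS
  have hSL : S ⊆ L := Set.inter_subset_left
  have hSsym : ∀ x ∈ S, v - x ∈ S := by
    rintro x ⟨h1, h2⟩
    exact ⟨h2, by simpa using h1⟩
  have hScomp : IsCompact S :=
    hLcomp.inter_right (hLcomp.isClosed.preimage (by continuity))
  have hSconv : Convex ℝ S := by
    refine hLconv.inter ?_
    have : (fun y : EuclideanSpace ℝ (Fin n) => v - y) ⁻¹' L = v +ᵥ (-L) := by
      ext y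
      simp only [Set.mem_preimage, Set.mem_vadd_set, Set.mem_neg, vadd_eq_add]
      constructor
      · intro hy
        refine ⟨y - v, ?_, by abel⟩
        simpa [neg_sub] using hy
      · rintro ⟨z, hz, rfl⟩
        have he : v - (v + z) = -z := by abel
        rw [he]
        exact hz
    rw [this]
    exact (hLconv.neg).vadd v
  have hSpos : 0 < volume S := by
    by_contra h
    push_neg at h
    have h0 : volume S = 0 := le_antisymm h bot_le
    rw [h0, mul_zero] at hv
    exact absurd (le_antisymm hv bot_le) hLpos.ne'
  have hSne : S.Nonempty := nonempty_of_measure_ne_zero hSpos.ne'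
  have hvhalf : (2⁻¹ : ℝ) • v ∈ S := by
    obtain ⟨x, hx⟩ := hSne
    have h3 := hSconv hx (hSsym x hx) (by norm_num : (0:ℝ) ≤ 2⁻¹)
      (by norm_num : (0:ℝ) ≤ 2⁻¹) (by norm_num)
    have he : (2⁻¹ : ℝ) • x + (2⁻¹ : ℝ) • (v - x) = (2⁻¹ : ℝ) • v := by
      rw [smul_sub]; abel
    rwa [he] at h3
  set c : EuclideanSpace ℝ (Fin n) := (2⁻¹ : ℝ) • v with hc
  set M : Set (EuclideanSpace ℝ (Fin n)) := (-c) +ᵥ S with hM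
  have hMconv : Convex ℝ M := hSconv.vadd _
  have hvc : v = c + c := by
    rw [hc, ← add_smul]; norm_num
  have hMcomp : IsCompact M := by
    rw [hM, ← Set.image_vadd]
    exact hScomp.image (continuous_const_vadd _)
  have hMmeas : MeasurableSet M := hMcomp.isClosed.measurableSet
  have hM0 : (0 : EuclideanSpace ℝ (Fin n)) ∈ M := ⟨c, hvhalf, by simp⟩
  have hMsym : ∀ x ∈ M, -x ∈ M := by
    rintro x ⟨s, hs, rfl⟩
    refine ⟨v - s, hSsym s hs, ?_⟩
    simp only [vadd_eq_add]
    rw [hvc]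
    abel
  have hMvol : volume M = volume S := measure_vadd _ _ _
  have hML : M ⊆ (-c) +ᵥ L := Set.vadd_set_mono hSL
  -- half of M
  set H : Set (EuclideanSpace ℝ (Fin n)) := (2⁻¹ : ℝ) • M with hH
  have hHM : H ⊆ M := by
    rintro x ⟨m, hm, rfl⟩
    have := hMconv hM0 hm (by norm_num : (0:ℝ) ≤ 2⁻¹) (by norm_num : (0:ℝ) ≤ 2⁻¹) (by norm_num)
    simpa using this
  have hHmeas : MeasurableSet H := by
    have : IsCompact H := hMcomp.smul _
    exact this.isClosed.measurableSet
  have hHvol : volume H = (2 ^ n : ℝ≥0∞)⁻¹ * volume M := by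
    rw [hH, Measure.addHaar_smul]
    congr 1
    rw [finrank_euclideanSpace_fin, abs_of_nonneg (by positivity),
      ENNReal.ofReal_pow (by norm_num), ENNReal.ofReal_inv_of_pos (by norm_num),
      ENNReal.inv_pow]
    norm_num
  have hHadd : ∀ a ∈ H, ∀ b ∈ H, a - b ∈ M := by
    rintro a ⟨m1, hm1, rfl⟩ b ⟨m2, hm2, rfl⟩
    have hneg : -m2 ∈ M := hMsym m2 hm2
    have := hMconv hm1 hneg (by norm_num : (0:ℝ) ≤ 2⁻¹) (by norm_num : (0:ℝ) ≤ 2⁻¹) (by norm_num)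
    simpa [sub_eq_add_neg, smul_neg] using this
  -- the family of packings
  set P : Set (Finset (EuclideanSpace ℝ (Fin n))) :=
    {F | ↑F ⊆ K ∧ (↑F : Set (EuclideanSpace ℝ (Fin n))).PairwiseDisjoint fun x => x +ᵥ H} with hP
  have hPempty : (∅ : Finset (EuclideanSpace ℝ (Fin n))) ∈ P := by simp [hP]
  have h2n0 : (2 : ℝ≥0∞) ^ n ≠ 0 := by positivity
  have h2nt : (2 : ℝ≥0∞) ^ n ≠ ∞ := ENNReal.pow_ne_top (by norm_num)
  have hHpos : 0 < volume H := by
    rw [hHvol, hMvol]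
    exact ENNReal.mul_pos (ENNReal.inv_ne_zero.2 h2nt) hSpos.ne'
  have hKLfin : volume (K + L) ≠ ∞ := (hKcomp.add hLcomp).measure_lt_top.ne
  have hshift : K + ((-c) +ᵥ L) = (-c) +ᵥ (K + L) := by
    ext x
    simp only [Set.mem_add, Set.mem_vadd_set, vadd_eq_add]
    constructor
    · rintro ⟨k, hk, y, ⟨l, hl, rfl⟩, rfl⟩
      exact ⟨k + l, ⟨k, hk, l, hl, rfl⟩, by abel⟩
    · rintro ⟨y, ⟨k, hk, l, hl, rfl⟩, rfl⟩
      exact ⟨k, hk, -c + l, ⟨l, hl, rfl⟩, by abel⟩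
  have hHfin : volume H ≠ ∞ := by
    have hHcomp : IsCompact H := hMcomp.smul _
    exact hHcomp.measure_lt_top.ne
  have hvaddmeas : ∀ x : EuclideanSpace ℝ (Fin n), MeasurableSet (x +ᵥ H) := fun x => hHmeas.const_vadd x
  have hvolbound : ∀ F ∈ P, (F.card : ℝ≥0∞) * volume H ≤ volume (K + L) := by
    rintro F ⟨hFK, hFdisj⟩
    have hdisj : volume (⋃ x ∈ F, x +ᵥ H) = ∑ x ∈ F, volume (x +ᵥ H) :=
      measure_biUnion_finset hFdisj fun x _ => hvaddmeas x
    have hsub : (⋃ x ∈ F, x +ᵥ H) ⊆ (-c) +ᵥ (K + L) := by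
      rw [← hshift]
      refine Set.iUnion₂_subset fun x hx => ?_
      rintro z ⟨a, ha, rfl⟩
      exact Set.add_mem_add (hFK hx) ((Set.vadd_set_mono hSL) (hHM ha))
    calc (F.card : ℝ≥0∞) * volume H = ∑ _x ∈ F, volume H := by
          rw [Finset.sum_const, nsmul_eq_mul]
      _ = ∑ x ∈ F, volume (x +ᵥ H) := by
          refine Finset.sum_congr rfl fun x _ => ?_
          rw [measure_vadd]
      _ = volume (⋃ x ∈ F, x +ᵥ H) := hdisj.symm
      _ ≤ volume ((-c) +ᵥ (K + L)) := measure_mono hsub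
      _ = volume (K + L) := measure_vadd _ _ _
  -- the cardinalities of packings are bounded
  set B : ℕ := ⌈(volume (K + L) / volume H).toReal⌉₊ with hB
  have hcardle : ∀ F ∈ P, F.card ≤ B := by
    intro F hF
    have h1 : (F.card : ℝ≥0∞) ≤ volume (K + L) / volume H := by
      rw [ENNReal.le_div_iff_mul_le (Or.inl hHpos.ne') (Or.inl hHfin)]
      exact hvolbound F hF
    have h2 : volume (K + L) / volume H ≠ ∞ :=
      (ENNReal.div_lt_top hKLfin hHpos.ne').ne
    have h3 : (F.card : ℝ) ≤ (volume (K + L) / volume H).toReal := by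
      have := ENNReal.toReal_mono h2 h1
      simpa using this
    exact_mod_cast h3.trans (Nat.le_ceil _)
  -- extract a maximal packing
  set cset : Set ℕ := (fun F : Finset (EuclideanSpace ℝ (Fin n)) => F.card) '' P with hcset
  have hcne : cset.Nonempty := ⟨0, ∅, hPempty, by simp⟩
  have hcbdd : BddAbove cset := ⟨B, by rintro m ⟨F, hF, rfl⟩; exact hcardle F hF⟩
  obtain ⟨F, hFP, hFcard0⟩ := Nat.sSup_mem hcne hcbdd
  have hFcard : F.card = sSup cset := hFcard0
  -- maximality gives a covering of K by translates of M
  have hcover : K ⊆ ⋃ x ∈ F, x +ᵥ M := by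
    intro y hy
    by_contra hyn
    simp only [Set.mem_iUnion, exists_prop, not_exists, not_and] at hyn
    have hyM : ∀ x ∈ F, y ∉ x +ᵥ M := hyn
    have hyF : y ∉ F := fun h => hyM y h ⟨0, hM0, by simp⟩
    have hins : insert y F ∈ P := by
      constructor
      · rw [Finset.coe_insert]
        exact Set.insert_subset hy hFP.1
      · rw [Finset.coe_insert]
        refine hFP.2.insert fun x hx hxy => ?_
        rw [Set.disjoint_left]
        rintro z ⟨a, ha, rfl⟩ ⟨b, hb, hzb⟩
        refine hyM x hx ⟨b - a, hHadd b hb a ha, ?_⟩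
        simp only [vadd_eq_add] at hzb ⊢
        rw [show x + (b - a) = x + b - a by abel, hzb]
        abel
    have hle : (insert y F).card ≤ sSup cset :=
      le_csSup hcbdd ⟨insert y F, hins, rfl⟩
    rw [Finset.card_insert_of_notMem hyF, hFcard] at hle
    omega
  -- hence a covering by translates of L
  have hcovL : K ⊆ ⋃ c' ∈ F.image (fun x => x + (-c)), c' +ᵥ L := by
    intro y hy
    obtain ⟨x, hx⟩ := Set.mem_iUnion.1 (hcover hy)
    simp only [Set.mem_iUnion] at hx
    obtain ⟨hxF, m, hm, hym⟩ := hx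
    obtain ⟨l, hl, hml⟩ := hML hm
    refine Set.mem_iUnion₂.2 ⟨x + (-c), Finset.mem_image_of_mem _ hxF, l, hl, ?_⟩
    simp only [vadd_eq_add] at *
    rw [← hym, ← hml]
    abel
  have hcovN : covN K L ≤ F.card := by
    refine le_trans (Nat.sInf_le ⟨F.image (fun x => x + (-c)), rfl, hcovL⟩) ?_
    exact Finset.card_image_le
  -- volume comparison in ℝ≥0∞
  have hMH : volume M = 2 ^ n * volume H := by
    rw [hHvol, ← mul_assoc, ENNReal.mul_inv_cancel h2n0 h2nt, one_mul]
  have hL4H : volume L ≤ 4 ^ n * volume H := by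
    calc volume L ≤ 2 ^ n * volume S := hv
      _ = 2 ^ n * volume M := by rw [hMvol]
      _ = 2 ^ n * (2 ^ n * volume H) := by rw [hMH]
      _ = 4 ^ n * volume H := by
          rw [← mul_assoc, ← mul_pow]
          norm_num
  have key : (covN K L : ℝ≥0∞) * volume L ≤ 4 ^ n * volume (K + L) := by
    calc (covN K L : ℝ≥0∞) * volume L ≤ (F.card : ℝ≥0∞) * (4 ^ n * volume H) := by
          exact mul_le_mul' (by exact_mod_cast Nat.cast_le.2 hcovN) hL4H
      _ = 4 ^ n * ((F.card : ℝ≥0∞) * volume H) := by ring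
      _ ≤ 4 ^ n * volume (K + L) := by
          exact mul_le_mul_right (hvolbound F hFP) _
  -- pass to real numbers
  have h4t : ((4 : ℝ≥0∞) ^ n * volume (K + L)) ≠ ∞ :=
    ENNReal.mul_ne_top (ENNReal.pow_ne_top (by norm_num)) hKLfin
  have hreal := ENNReal.toReal_mono h4t key
  rw [ENNReal.toReal_mul, ENNReal.toReal_mul, ENNReal.toReal_pow] at hreal
  simp only [ENNReal.toReal_natCast, ENNReal.toReal_ofNat] at hreal
  have hlpos : 0 < (volume L).toReal := ENNReal.toReal_pos hLpos.ne' hLfin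
  rw [le_div_iff₀ hlpos]
  exact hreal
end

section
/- Let K₁, K₂ be centered convex bodies in R^n each admitting an M-ellipsoid: there exist ellipsoids E_i with |E_i| = |K_i| and |K_i + T|^{1/n} ≍ |E_i + T|^{1/n} (up to an absolute constant factor) for all convex bodies T. If moreover each E_i is a ball r_i B_2^n, then for all t₁, t₂ > 0, |t₁K₁ + t₂K₂|^{1/n} ≤ C(t₁|K₁|^{1/n} + t₂|K₂|^{1/n}) for an absolute constant C. -/
open MeasureTheory Set
open scoped Pointwise

private lemma vpow_smul {n : ℕ} (hn : 0 < n) {t : ℝ} (ht : 0 < t)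
    (S : Set (EuclideanSpace ℝ (Fin n))) :
    (volume (t • S)).toReal ^ ((1 : ℝ) / n) = t * (volume S).toReal ^ ((1 : ℝ) / n) := by
  rw [Measure.addHaar_smul, ENNReal.toReal_mul,
    ENNReal.toReal_ofReal (abs_nonneg _), abs_pow, abs_of_pos ht,
    Real.mul_rpow (by positivity) ENNReal.toReal_nonneg]
  congr 1
  rw [finrank_euclideanSpace, Fintype.card_fin, ← Real.rpow_natCast t n,
    ← Real.rpow_mul ht.le]
  rw [mul_one_div, div_self (by exact_mod_cast hn.ne'), Real.rpow_one]

/-- If `K₁, K₂` are centered convex bodies in ℝⁿ whose `M`-ellipsoids can be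
taken to be Euclidean balls `rᵢB₂ⁿ` (with `|rᵢB₂ⁿ| = |Kᵢ|` and
`|Kᵢ + T|^{1/n} ≍ |rᵢB₂ⁿ + T|^{1/n}` up to the factor `c` for all convex bodies `T`),
then for all `t₁, t₂ > 0`,
`|t₁K₁ + t₂K₂|^{1/n} ≤ C (t₁|K₁|^{1/n} + t₂|K₂|^{1/n})` with `C` depending only on `c`. -/
theorem statement18 (c : ℝ) (hc : 1 ≤ c) :
    ∃ C : ℝ, 0 < C ∧
      ∀ (n : ℕ), 0 < n → ∀ (K₁ K₂ : Set (EuclideanSpace ℝ (Fin n))) (r₁ r₂ : ℝ),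
        Convex ℝ K₁ → IsCompact K₁ → (interior K₁).Nonempty →
        (∀ θ : EuclideanSpace ℝ (Fin n), (∫ x in K₁, (inner ℝ x θ : ℝ)) = 0) →
        Convex ℝ K₂ → IsCompact K₂ → (interior K₂).Nonempty →
        (∀ θ : EuclideanSpace ℝ (Fin n), (∫ x in K₂, (inner ℝ x θ : ℝ)) = 0) →
        0 < r₁ → 0 < r₂ →
        volume (r₁ • Metric.closedBall (0 : EuclideanSpace ℝ (Fin n)) 1) = volume K₁ →
        volume (r₂ • Metric.closedBall (0 : EuclideanSpace ℝ (Fin n)) 1) = volume K₂ →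
        (∀ T : Set (EuclideanSpace ℝ (Fin n)), Convex ℝ T → IsCompact T →
          (interior T).Nonempty →
          c⁻¹ * (volume (r₁ • Metric.closedBall (0 : EuclideanSpace ℝ (Fin n)) 1 + T)).toReal
              ^ ((1 : ℝ) / n) ≤
            (volume (K₁ + T)).toReal ^ ((1 : ℝ) / n) ∧
          (volume (K₁ + T)).toReal ^ ((1 : ℝ) / n) ≤
            c * (volume (r₁ • Metric.closedBall (0 : EuclideanSpace ℝ (Fin n)) 1 + T)).toReal
              ^ ((1 : ℝ) / n)) →
        (∀ T : Set (EuclideanSpace ℝ (Fin n)), Convex ℝ T → IsCompact T →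
          (interior T).Nonempty →
          c⁻¹ * (volume (r₂ • Metric.closedBall (0 : EuclideanSpace ℝ (Fin n)) 1 + T)).toReal
              ^ ((1 : ℝ) / n) ≤
            (volume (K₂ + T)).toReal ^ ((1 : ℝ) / n) ∧
          (volume (K₂ + T)).toReal ^ ((1 : ℝ) / n) ≤
            c * (volume (r₂ • Metric.closedBall (0 : EuclideanSpace ℝ (Fin n)) 1 + T)).toReal
              ^ ((1 : ℝ) / n)) →
        ∀ t₁ t₂ : ℝ, 0 < t₁ → 0 < t₂ →
          (volume (t₁ • K₁ + t₂ • K₂)).toReal ^ ((1 : ℝ) / n) ≤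
            C * (t₁ * (volume K₁).toReal ^ ((1 : ℝ) / n) +
              t₂ * (volume K₂).toReal ^ ((1 : ℝ) / n)) := by
  have hc0 : 0 < c := lt_of_lt_of_le one_pos hc
  refine ⟨c ^ 2, by positivity, ?_⟩
  intro n hn K₁ K₂ r₁ r₂ hK₁conv hK₁comp hK₁int _ hK₂conv hK₂comp hK₂int _ hr₁ hr₂
    hvol₁ hvol₂ hM₁ hM₂ t₁ t₂ ht₁ ht₂
  set B : Set (EuclideanSpace ℝ (Fin n)) := Metric.closedBall 0 1 with hB
  set v : Set (EuclideanSpace ℝ (Fin n)) → ℝ :=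
    fun S => (volume S).toReal ^ ((1 : ℝ) / n) with hv
  -- closed balls as smuls
  have hball : ∀ a : ℝ, 0 < a → a • B = Metric.closedBall (0 : EuclideanSpace ℝ (Fin n)) a := by
    intro a ha
    rw [hB, smul_unitClosedBall, Real.norm_eq_abs, abs_of_pos ha]
  -- volumes of K's
  have hvB : v B ≥ 0 := Real.rpow_nonneg ENNReal.toReal_nonneg _
  have hvK₁ : v K₁ = r₁ * v B := by
    show (volume K₁).toReal ^ ((1:ℝ)/n) = r₁ * (volume B).toReal ^ ((1:ℝ)/n)
    rw [← hvol₁]; exact vpow_smul hn hr₁ B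
  have hvK₂ : v K₂ = r₂ * v B := by
    show (volume K₂).toReal ^ ((1:ℝ)/n) = r₂ * (volume B).toReal ^ ((1:ℝ)/n)
    rw [← hvol₂]; exact vpow_smul hn hr₂ B
  -- T₁ := (t₂/t₁) • K₂
  set s : ℝ := t₁ * r₁ / t₂ with hs
  have hspos : 0 < s := by positivity
  set T₁ : Set (EuclideanSpace ℝ (Fin n)) := (t₂ / t₁) • K₂ with hT₁
  have hq : (0:ℝ) < t₂ / t₁ := by positivity
  have hT₁conv : Convex ℝ T₁ := hK₂conv.smul _
  have hT₁comp : IsCompact T₁ := hK₂comp.smul _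
  have hT₁int : (interior T₁).Nonempty := by
    rw [hT₁, interior_smul₀ hq.ne' K₂]
    exact hK₂int.smul_set
  -- T₂ := closedBall 0 s
  set T₂ : Set (EuclideanSpace ℝ (Fin n)) := Metric.closedBall (0 : EuclideanSpace ℝ (Fin n)) s
    with hT₂
  have hT₂conv : Convex ℝ T₂ := convex_closedBall _ _
  have hT₂comp : IsCompact T₂ := isCompact_closedBall _ _
  have hT₂int : (interior T₂).Nonempty := by
    rw [hT₂, interior_closedBall _ hspos.ne']
    exact ⟨0, Metric.mem_ball_self hspos⟩
  -- step 1 : t₁ • K₁ + t₂ • K₂ = t₁ • (K₁ + T₁)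
  have e1 : t₁ • K₁ + t₂ • K₂ = t₁ • (K₁ + T₁) := by
    rw [smul_add, hT₁, smul_smul, mul_div_cancel₀ t₂ ht₁.ne']
  -- step 2 : r₁ • B + T₁ = (t₂/t₁) • (K₂ + T₂)
  have hmul : (t₂ / t₁) * s = r₁ := by
    rw [hs]; field_simp
  have e2 : r₁ • B + T₁ = (t₂ / t₁) • (K₂ + T₂) := by
    rw [smul_add, hT₁, add_comm]
    congr 1
    rw [hT₂, ← hball s hspos, smul_smul, hmul]
  -- step 3 : r₂ • B + T₂ = (r₂ + s) • B
  have e3 : r₂ • B + T₂ = (r₂ + s) • B := by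
    rw [hball r₂ hr₂, hT₂, hball _ (by positivity),
      closedBall_add_closedBall hr₂.le hspos.le, add_zero]
  -- chain
  have h1 : v (t₁ • K₁ + t₂ • K₂) = t₁ * v (K₁ + T₁) := by
    rw [e1]; exact vpow_smul hn ht₁ _
  have h2 : v (K₁ + T₁) ≤ c * v (r₁ • B + T₁) := (hM₁ T₁ hT₁conv hT₁comp hT₁int).2
  have h3 : v (r₁ • B + T₁) = (t₂ / t₁) * v (K₂ + T₂) := by
    rw [e2]; exact vpow_smul hn hq _
  have h4 : v (K₂ + T₂) ≤ c * v (r₂ • B + T₂) := (hM₂ T₂ hT₂conv hT₂comp hT₂int).2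
  have h5 : v (r₂ • B + T₂) = (r₂ + s) * v B := by
    rw [e3]; exact vpow_smul hn (by positivity) _
  have hvnonneg : 0 ≤ v (K₂ + T₂) := Real.rpow_nonneg ENNReal.toReal_nonneg _
  calc v (t₁ • K₁ + t₂ • K₂) = t₁ * v (K₁ + T₁) := h1
    _ ≤ t₁ * (c * v (r₁ • B + T₁)) := by
        exact mul_le_mul_of_nonneg_left h2 ht₁.le
    _ = t₁ * (c * ((t₂ / t₁) * v (K₂ + T₂))) := by rw [h3]
    _ ≤ t₁ * (c * ((t₂ / t₁) * (c * ((r₂ + s) * v B)))) := by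
        have := mul_le_mul_of_nonneg_left (h5 ▸ h4) hq.le
        exact mul_le_mul_of_nonneg_left (mul_le_mul_of_nonneg_left this hc0.le) ht₁.le
    _ = c ^ 2 * (t₁ * (r₁ * v B) + t₂ * (r₂ * v B)) := by
        field_simp [hs]
        have hts : t₂ * s = t₁ * r₁ := by rw [hs]; exact mul_div_cancel₀ (t₁ * r₁) ht₂.ne'
        linear_combination (v B) * hts
    _ = c ^ 2 * (t₁ * v K₁ + t₂ * v K₂) := by rw [hvK₁, hvK₂]
end
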